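/- Let Ω and Ω* be measurable subsets of ℝ^d of equal finite volume with Ω* a ball centered at the origin, and let F(x) = f(|x|) with f : [0,∞) → ℝ strictly increasing and F integrable on Ω ∪ Ω*. Then ∫_Ω F dx ≥ ∫_{Ω*} F dx, with equality if and only if Ω equals Ω* up to measure zero. -/

import Mathlib

open MeasureTheory

theorem increasing_radial_rearrangement (d : ℕ) (Ω Ωstar : Set (EuclideanSpace ℝ (Fin d)))
    (R : ℝ) (hΩ : MeasurableSet Ω) (hΩstar : Ωstar = Metric.ball 0 R)
    (hvol : volume Ω = volume Ωstar) (hfin : volume Ω < ⊤)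
    (f : ℝ → ℝ) (hf : StrictMonoOn f (Set.Ici 0))
    (F : EuclideanSpace ℝ (Fin d) → ℝ) (hFdef : ∀ x, F x = f ‖x‖)
    (hF : IntegrableOn F (Ω ∪ Ωstar)) :
    (∫ x in Ωstar, F x) ≤ (∫ x in Ω, F x) ∧
      ((∫ x in Ω, F x) = (∫ x in Ωstar, F x) ↔ volume (symmDiff Ω Ωstar) = 0) := by
  subst hΩstar
  set S : Set (EuclideanSpace ℝ (Fin d)) := Metric.ball 0 R with hS
  by_cases hR : R ≤ 0
  · have hSe : S = ∅ := Metric.ball_eq_empty.mpr hR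
    have hΩ0 : volume Ω = 0 := by rw [hvol, hSe]; simp
    have h1 : (∫ x in Ω, F x) = 0 := by
      rw [Measure.restrict_eq_zero.mpr hΩ0]; simp
    have h2 : (∫ x in S, F x) = 0 := by rw [hSe]; simp
    refine ⟨by rw [h1, h2], ?_⟩
    constructor
    · intro _
      have : symmDiff Ω S = Ω := by rw [hSe]; simp [Set.symmDiff_def]
      rw [this, hΩ0]
    · intro _; rw [h1, h2]
  · push_neg at hR
    have hR0 : (0:ℝ) ≤ R := le_of_lt hR
    have mS : MeasurableSet S := measurableSet_ball
    set A : Set (EuclideanSpace ℝ (Fin d)) := Ω \ S with hA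
    set B : Set (EuclideanSpace ℝ (Fin d)) := S \ Ω with hB
    set I : Set (EuclideanSpace ℝ (Fin d)) := Ω ∩ S with hI
    have mA : MeasurableSet A := hΩ.diff mS
    have mB : MeasurableSet B := mS.diff hΩ
    have mI : MeasurableSet I := hΩ.inter mS
    have hIfin : volume I ≠ ⊤ :=
      (lt_of_le_of_lt (measure_mono Set.inter_subset_left) hfin).ne
    have hAfin : volume A ≠ ⊤ :=
      (lt_of_le_of_lt (measure_mono Set.diff_subset) hfin).ne
    have hBfin : volume B ≠ ⊤ := by
      refine (lt_of_le_of_lt (measure_mono Set.diff_subset) ?_).ne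
      rw [← hvol]; exact hfin
    have h1 : volume I + volume A = volume Ω := measure_inter_add_diff Ω mS
    have h2 : volume I + volume B = volume S := by
      have h2' : volume (S ∩ Ω) + volume (S \ Ω) = volume S := measure_inter_add_diff S hΩ
      rwa [Set.inter_comm] at h2'
    have hμAB : volume A = volume B := by
      have : volume I + volume A = volume I + volume B := by
        rw [h1, h2, hvol]
      exact (ENNReal.add_right_inj hIfin).mp this
    have hABr : (volume A).toReal = (volume B).toReal := by rw [hμAB]
    -- integrability
    have hFI : IntegrableOn F I := hF.mono_set (Set.inter_subset_left.trans Set.subset_union_left)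
    have hFA : IntegrableOn F A := hF.mono_set (Set.diff_subset.trans Set.subset_union_left)
    have hFB : IntegrableOn F B := hF.mono_set (Set.diff_subset.trans Set.subset_union_right)
    -- splits
    have hdisjA : Disjoint I A := Set.disjoint_sdiff_right.mono_left Set.inter_subset_right
    have hdisjB : Disjoint I B := Set.disjoint_sdiff_right.mono_left Set.inter_subset_left
    have hsplitΩ : (∫ x in Ω, F x) = (∫ x in I, F x) + ∫ x in A, F x := by
      rw [← setIntegral_union hdisjA mA hFI hFA, Set.inter_union_diff]
    have hsplitS : (∫ x in S, F x) = (∫ x in I, F x) + ∫ x in B, F x := by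
      have hun : I ∪ B = S := by rw [hI, hB, Set.inter_comm, Set.inter_union_diff]
      rw [← setIntegral_union hdisjB mB hFI hFB, hun]
    -- pointwise bounds
    have hAx : ∀ x ∈ A, f R ≤ F x := by
      intro x hx
      have hxn : R ≤ ‖x‖ := by
        have := hx.2
        rw [hS, Metric.mem_ball, dist_zero_right] at this
        linarith [not_lt.mp this]
      rw [hFdef]
      exact hf.monotoneOn (Set.mem_Ici.mpr hR0) (Set.mem_Ici.mpr (hR0.trans hxn)) hxn
    have hBx : ∀ x ∈ B, F x < f R := by
      intro x hx
      have hxn : ‖x‖ < R := by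
        have := hx.1
        rwa [hS, Metric.mem_ball, dist_zero_right] at this
      rw [hFdef]
      exact hf (Set.mem_Ici.mpr (norm_nonneg x)) (Set.mem_Ici.mpr hR0) hxn
    have hBconst : IntegrableOn (fun _ => f R) B :=
      integrableOn_const hBfin
    have hAconst : IntegrableOn (fun _ => f R) A :=
      integrableOn_const hAfin
    have hB_le : (∫ x in B, F x) ≤ (volume B).toReal * f R := by
      have := setIntegral_mono_on hFB hBconst mB (fun x hx => le_of_lt (hBx x hx))
      rwa [setIntegral_const, smul_eq_mul] at this
    have hA_ge : (volume A).toReal * f R ≤ ∫ x in A, F x := by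
      have := setIntegral_mono_on hAconst hFA mA (fun x hx => hAx x hx)
      rwa [setIntegral_const, smul_eq_mul] at this
    have hmain : (∫ x in S, F x) ≤ ∫ x in Ω, F x := by
      rw [hsplitΩ, hsplitS]
      have : (∫ x in B, F x) ≤ ∫ x in A, F x := by
        calc (∫ x in B, F x) ≤ (volume B).toReal * f R := hB_le
        _ = (volume A).toReal * f R := by rw [hABr]
        _ ≤ ∫ x in A, F x := hA_ge
      linarith
    refine ⟨hmain, ?_, ?_⟩
    · intro heq
      have hAB : (∫ x in A, F x) = ∫ x in B, F x := by
        rw [hsplitΩ, hsplitS] at heq; linarith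
      have hB0 : volume B = 0 := by
        by_contra hB0
        have hBpos : 0 < volume B := lt_of_le_of_ne (zero_le) (Ne.symm hB0)
        have hg : IntegrableOn (fun x => f R - F x) B := hBconst.sub hFB
        have hpos : 0 < ∫ x in B, (f R - F x) := by
          rw [setIntegral_pos_iff_support_of_nonneg_ae ?_ hg]
          · refine lt_of_lt_of_le hBpos (measure_mono ?_)
            intro x hx
            exact ⟨by simpa using (sub_pos.mpr (hBx x hx)).ne', hx⟩
          · refine (ae_restrict_iff' mB).mpr (.of_forall fun x hx => ?_)
            exact sub_nonneg.mpr (le_of_lt (hBx x hx))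
        have hsub : (∫ x in B, (f R - F x)) = (volume B).toReal * f R - ∫ x in B, F x := by
          rw [integral_sub hBconst hFB, setIntegral_const, smul_eq_mul, measureReal_def]
        have hlt : (∫ x in B, F x) < (volume B).toReal * f R := by
          rw [hsub] at hpos; linarith
        have : (∫ x in B, F x) < ∫ x in B, F x := by
          calc (∫ x in B, F x) < (volume B).toReal * f R := hlt
          _ = (volume A).toReal * f R := by rw [hABr]
          _ ≤ ∫ x in A, F x := hA_ge
          _ = ∫ x in B, F x := hAB
        exact lt_irrefl _ this
      have hA0 : volume A = 0 := by rw [hμAB, hB0]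
      have : symmDiff Ω S = A ∪ B := Set.symmDiff_def Ω S
      rw [this]
      exact le_antisymm (le_trans (measure_union_le A B) (by rw [hA0, hB0]; simp)) (zero_le)
    · intro h0
      have hae : Ω =ᵐ[volume] S := by
        rwa [← measure_symmDiff_eq_zero_iff]
      exact setIntegral_congr_set hae
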